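/- arXiv:2002.00697 — 2 statements merged into one kernel-verified Lean document; each statement's English description precedes it below -/
import Mathlib

section
/- Let ψ be the cyclic permutation of {1,…,n} given by ψ(i) = i+1 for i < n and ψ(n) = 1. The K-linear map Ψ : Iuₙ → Iuₙ determined on the basis by Ψ(x_{ij}) = x_{ψ(i)ψ(j)}, Ψ(a_i) = a_{ψ(i)}, Ψ(b_i) = b_{ψ(i)} is a Lie algebra automorphism of Iuₙ. -/
/-- Index set for the basis of `Iuₙ`: the off-diagonal pairs indexing the `x_{ij}` (`i ≠ j`),
then the `a_i`'s, then the `b_i`'s. -/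
abbrev IuIdx (n : ℕ) : Type := { p : Fin n × Fin n // p.1 ≠ p.2 } ⊕ (Fin n ⊕ Fin n)

/-- `Iuₙ`: the free `K`-vector space on the basis `{x_{ij} : i ≠ j} ∪ {a_i} ∪ {b_i}`. -/
abbrev Iu (n : ℕ) (K : Type*) [Field K] : Type _ := IuIdx n →₀ K

variable (n : ℕ) (K : Type*) [Field K]

/-- The basis element `x_{ij}` (`i ≠ j`). -/
noncomputable def xE (i j : Fin n) (h : i ≠ j) : Iu n K :=
  Finsupp.single (Sum.inl ⟨(i, j), h⟩) 1

/-- The basis element `a_i`. -/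
noncomputable def aE (i : Fin n) : Iu n K := Finsupp.single (Sum.inr (Sum.inl i)) 1

/-- The basis element `b_i`. -/
noncomputable def bE (i : Fin n) : Iu n K := Finsupp.single (Sum.inr (Sum.inr i)) 1

/-- `x_{ij}` as a total function (junk value `0` when `i = j`). -/
noncomputable def xe (i j : Fin n) : Iu n K := if h : i ≠ j then xE n K i j h else 0

/-- The length `λ(i,j)`: equals `j - i` if `i < j`, and `n - (i - j)` if `i > j`. -/
def lam (n : ℕ) (i j : Fin n) : ℕ := (j - i : Fin n).val

/-- The bracket of `Iuₙ` on basis elements: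
`[x_{ij}, x_{kl}] = δ_{jk} x_{il} - δ_{li} x_{kj}` if `λ(i,j) + λ(k,l) < n` and `0` otherwise
(unless both `j = k` and `l = i`); `[x_{ij}, x_{ji}] = ½(b_i - b_j)`;
`[a_i, x_{jk}] = (δ_{ij} - δ_{ik}) x_{jk}`; `[b_i, x_{jk}] = 0`;
`[a_i, a_j] = [b_i, b_j] = [a_i, b_j] = 0`; extended antisymmetrically. -/
noncomputable def bb : IuIdx n → IuIdx n → Iu n K
  | Sum.inl ⟨(i, j), _⟩, Sum.inl ⟨(k, l), _⟩ =>
      if k = j ∧ l = i then ((2 : K)⁻¹) • (bE n K i - bE n K j)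
      else if lam n i j + lam n k l < n then
        (if j = k then xe n K i l else 0) - (if l = i then xe n K k j else 0)
      else 0
  | Sum.inr (Sum.inl i), Sum.inl ⟨(j, k), _⟩ =>
      (((if i = j then 1 else 0) : K) - ((if i = k then 1 else 0) : K)) • xe n K j k
  | Sum.inl ⟨(j, k), _⟩, Sum.inr (Sum.inl i) =>
      -((((if i = j then 1 else 0) : K) - ((if i = k then 1 else 0) : K)) • xe n K j k)
  | _, _ => 0

/-- The bilinear bracket of `Iuₙ`, extended bilinearly from its values on basis elements. -/
noncomputable def br : Iu n K →ₗ[K] Iu n K →ₗ[K] Iu n K :=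
  Finsupp.lift (Iu n K →ₗ[K] Iu n K) K (IuIdx n) fun s =>
    Finsupp.lift (Iu n K) K (IuIdx n) fun t => bb n K s t

/-- The linear map `Ψ`, determined on the basis by incrementing all indices by `1` mod `n`
(on `Fin n`, the cyclic permutation `ψ` is `i ↦ i + 1`). -/
noncomputable def Psi [NeZero n] : Iu n K →ₗ[K] Iu n K :=
  Finsupp.lift (Iu n K) K (IuIdx n) fun t =>
    match t with
    | Sum.inl ⟨(i, j), _⟩ => xe n K (i + 1) (j + 1)
    | Sum.inr (Sum.inl i) => aE n K (i + 1)
    | Sum.inr (Sum.inr i) => bE n K (i + 1)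

section Aux

variable (n : ℕ) (K : Type*) [Field K] [NeZero n]

lemma fin_add_inj {i j : Fin n} (h : i ≠ j) : i + 1 ≠ j + 1 :=
  fun e => h ((add_left_inj 1).mp e)

/-- The shift on basis indices. -/
def sh : IuIdx n → IuIdx n
  | Sum.inl ⟨(i, j), h⟩ => Sum.inl ⟨(i + 1, j + 1), fin_add_inj n h⟩
  | Sum.inr (Sum.inl i) => Sum.inr (Sum.inl (i + 1))
  | Sum.inr (Sum.inr i) => Sum.inr (Sum.inr (i + 1))

lemma Psi_single (t : IuIdx n) (c : K) :
    Psi n K (Finsupp.single t c) = Finsupp.single (sh n t) c := by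
  rcases t with ⟨⟨i, j⟩, h⟩ | i | i
  · have h' : i ≠ j := h
    simp [Psi, sh, xe, xE, h', Finsupp.smul_single]
  · simp [Psi, sh, aE, Finsupp.smul_single]
  · simp [Psi, sh, bE, Finsupp.smul_single]

lemma Psi_xe (i j : Fin n) : Psi n K (xe n K i j) = xe n K (i + 1) (j + 1) := by
  rcases eq_or_ne i j with h | h
  · simp [xe, h]
  · rw [xe, dif_pos h, xe, dif_pos (fin_add_inj n h)]
    rw [xE, Psi_single]
    rfl

lemma Psi_bE (i : Fin n) : Psi n K (bE n K i) = bE n K (i + 1) := by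
  rw [bE, Psi_single]; rfl

lemma lam_shift (i j : Fin n) : lam n (i + 1) (j + 1) = lam n i j := by
  unfold lam
  rw [add_sub_add_right_eq_sub]

lemma Psi_bb (s t : IuIdx n) :
    Psi n K (bb n K s t) = bb n K (sh n s) (sh n t) := by
  rcases s with ⟨⟨i, j⟩, hij⟩ | i | i <;> rcases t with ⟨⟨k, l⟩, hkl⟩ | m | m <;>
    simp [bb, sh, apply_ite (Psi n K), Psi_xe, Psi_bE, lam_shift, smul_sub]

lemma br_single (s t : IuIdx n) (c d : K) :
    br n K (Finsupp.single s c) (Finsupp.single t d) = (c * d) • bb n K s t := by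
  simp [br, smul_smul]

/-- The inverse shift on basis indices. -/
def sh' : IuIdx n → IuIdx n
  | Sum.inl ⟨(i, j), h⟩ => Sum.inl ⟨(i - 1, j - 1), fun e => h (by
      have e' : i - 1 = j - 1 := e
      have := congrArg (· + 1) e'
      simp only [sub_add_cancel] at this; exact this)⟩
  | Sum.inr (Sum.inl i) => Sum.inr (Sum.inl (i - 1))
  | Sum.inr (Sum.inr i) => Sum.inr (Sum.inr (i - 1))

/-- The shift as an equivalence. -/
def shEquiv : IuIdx n ≃ IuIdx n where
  toFun := sh n
  invFun := sh' n
  left_inv t := by rcases t with ⟨⟨i, j⟩, h⟩ | i | i <;> simp [sh, sh']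
  right_inv t := by rcases t with ⟨⟨i, j⟩, h⟩ | i | i <;> simp [sh, sh']

lemma Psi_eq : Psi n K = (Finsupp.domLCongr (shEquiv n) :
    Iu n K ≃ₗ[K] Iu n K).toLinearMap := by
  apply Finsupp.lhom_ext
  intro a b
  rw [Psi_single]
  simp [shEquiv]

end Aux

/-- `Ψ` is a Lie algebra automorphism of `Iuₙ`. -/
theorem stmt1 (n : ℕ) [NeZero n] (hn : 2 ≤ n) (K : Type*) [Field K] (hK : (2 : K) ≠ 0) :
    Function.Bijective (Psi n K) ∧
    ∀ u v : Iu n K, Psi n K (br n K u v) = br n K (Psi n K u) (Psi n K v) := by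
  constructor
  · rw [Psi_eq]
    exact (Finsupp.domLCongr (shEquiv n) : Iu n K ≃ₗ[K] Iu n K).bijective
  · intro u v
    induction u using Finsupp.induction_linear with
    | zero => simp
    | add f g hf hg => simp [map_add, hf, hg]
    | single s c =>
      induction v using Finsupp.induction_linear with
      | zero => simp
      | add f g hf hg => simp [map_add, hf, hg]
      | single t d =>
        rw [br_single, map_smul, Psi_bb, Psi_single, Psi_single, br_single]
end

section
/- The Lie algebra Iuₙ is solvable. -/
variable (n : ℕ) (K : Type*) [Field K]

/-- The span of all brackets of elements of `S` with elements of `T`. -/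
noncomputable def bracketSpan (S T : Submodule K (Iu n K)) : Submodule K (Iu n K) :=
  Submodule.span K {w | ∃ u ∈ S, ∃ v ∈ T, w = br n K u v}

/-- The derived series of `Iuₙ`. -/
noncomputable def derSeries : ℕ → Submodule K (Iu n K)
  | 0 => ⊤
  | k + 1 => bracketSpan n K (derSeries k) (derSeries k)

-- new material
def inS (n m : ℕ) : IuIdx n → Prop
  | Sum.inl p => m ≤ lam n p.1.1 p.1.2
  | Sum.inr (Sum.inl _) => m = 0
  | Sum.inr (Sum.inr _) => True

def Sset (n m : ℕ) : Set (IuIdx n) := {ι | inS n m ι}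

noncomputable def Vm (m : ℕ) : Submodule K (Iu n K) := Finsupp.supported K K (Sset n m)

lemma br_single_single (s t : IuIdx n) :
    br n K (Finsupp.single s 1) (Finsupp.single t 1) = bb n K s t := by
  simp [br, Finsupp.lift_apply, Finsupp.sum_single_index]

lemma br_mem {A B : Set (IuIdx n)} {W : Submodule K (Iu n K)}
    (h : ∀ s ∈ A, ∀ t ∈ B, bb n K s t ∈ W) {u v : Iu n K}
    (hu : u ∈ Finsupp.supported K K A) (hv : v ∈ Finsupp.supported K K B) :
    br n K u v ∈ W := by
  rw [Finsupp.supported_eq_span_single] at hu hv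
  have key : ∀ s ∈ A, br n K (Finsupp.single s 1) v ∈ W := by
    intro s hs
    have : v ∈ W.comap (br n K (Finsupp.single s 1)) := by
      refine Submodule.span_le.mpr ?_ hv
      rintro _ ⟨t, ht, rfl⟩
      simpa [Submodule.mem_comap, br_single_single] using h s hs t ht
    exact this
  have h2 : u ∈ W.comap ((br n K).flip v) := by
    refine Submodule.span_le.mpr ?_ hu
    rintro _ ⟨s, hs, rfl⟩
    simpa [Submodule.mem_comap] using key s hs
  simpa [Submodule.mem_comap] using h2

lemma bracketSpan_le {S T : Submodule K (Iu n K)} {A B : Set (IuIdx n)}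
    {W : Submodule K (Iu n K)} (hS : S ≤ Finsupp.supported K K A)
    (hT : T ≤ Finsupp.supported K K B)
    (h : ∀ s ∈ A, ∀ t ∈ B, bb n K s t ∈ W) :
    bracketSpan n K S T ≤ W := by
  unfold bracketSpan
  rw [Submodule.span_le]
  rintro w ⟨u, hu, v, hv, rfl⟩
  exact br_mem n K h (hS hu) (hT hv)

lemma bE_mem (m : ℕ) (i : Fin n) : bE n K i ∈ Vm n K m :=
  Finsupp.single_mem_supported K 1 (by trivial)

lemma xE_mem {m : ℕ} {i j : Fin n} (h : i ≠ j) (hm : m ≤ lam n i j) :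
    xE n K i j h ∈ Vm n K m :=
  Finsupp.single_mem_supported K 1 hm

lemma lam_pos [NeZero n] {i j : Fin n} (h : i ≠ j) : 1 ≤ lam n i j := by
  rw [Nat.one_le_iff_ne_zero]
  intro h0
  have : j - i = 0 := Fin.ext (by simpa [lam] using h0)
  exact h (sub_eq_zero.mp this).symm

lemma lam_add [NeZero n] {i j l : Fin n} (h : lam n i j + lam n j l < n) :
    lam n i l = lam n i j + lam n j l := by
  unfold lam at *
  have e : (l - i : Fin n) = (j - i) + (l - j) := by abel
  rw [e, Fin.val_add, Nat.mod_eq_of_lt h]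

lemma xe_mem_one [NeZero n] (j k : Fin n) : xe n K j k ∈ Vm n K 1 := by
  unfold xe
  split
  · exact xE_mem n K ‹_› (lam_pos n ‹_›)
  · exact Submodule.zero_mem _

lemma bb_mem_one [NeZero n] (s t : IuIdx n) : bb n K s t ∈ Vm n K 1 := by
  rcases s with ⟨⟨i, j⟩, hij⟩ | i | i <;> rcases t with ⟨⟨k, l⟩, hkl⟩ | m | m <;>
    simp only [bb]
  · split
    · exact Submodule.smul_mem _ _ (Submodule.sub_mem _ (bE_mem n K 1 i) (bE_mem n K 1 j))
    split
    · refine Submodule.sub_mem _ ?_ ?_ <;> (split; · exact xe_mem_one n K _ _); all_goals exact Submodule.zero_mem _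
    · exact Submodule.zero_mem _
  · exact Submodule.neg_mem _ (Submodule.smul_mem _ _ (xe_mem_one n K _ _))
  · exact Submodule.zero_mem _
  · exact Submodule.smul_mem _ _ (xe_mem_one n K _ _)
  all_goals exact Submodule.zero_mem _

lemma bb_mem [NeZero n] {m m' : ℕ} {s t : IuIdx n}
    (hs : s ∈ Sset n m) (ht : t ∈ Sset n m') :
    bb n K s t ∈ Vm n K (m + m') := by
  rcases s with ⟨⟨i, j⟩, hij⟩ | i | i <;> rcases t with ⟨⟨k, l⟩, hkl⟩ | p | p <;>
    simp only [bb]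
  · -- x x
    have hs' : m ≤ lam n i j := hs
    have ht' : m' ≤ lam n k l := ht
    split
    · exact Submodule.smul_mem _ _ (Submodule.sub_mem _ (bE_mem n K _ i) (bE_mem n K _ j))
    rename_i hne
    split
    · rename_i hlt
      refine Submodule.sub_mem _ ?_ ?_
      · split
        · rename_i hjk
          subst hjk
          have hil : i ≠ l := fun e => hne ⟨rfl, e.symm⟩
          rw [xe, dif_pos hil]
          refine xE_mem n K hil ?_
          rw [lam_add n hlt]
          omega
        · exact Submodule.zero_mem _
      · split
        · rename_i hli
          subst hli
          have hkj : k ≠ j := fun e => hne ⟨e, rfl⟩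
          rw [xe, dif_pos hkj]
          refine xE_mem n K hkj ?_
          have : lam n k l + lam n l j < n := by rwa [add_comm] at hlt
          rw [lam_add n this]
          omega
        · exact Submodule.zero_mem _
    · exact Submodule.zero_mem _
  · -- x a
    have hp : m' = 0 := ht
    have hs' : m ≤ lam n i j := hs
    subst hp
    refine Submodule.neg_mem _ (Submodule.smul_mem _ _ ?_)
    rw [xe, dif_pos hij]
    exact xE_mem n K hij (by simpa using hs')
  · exact Submodule.zero_mem _
  · -- a x
    have hi : m = 0 := hs
    have ht' : m' ≤ lam n k l := ht
    subst hi
    refine Submodule.smul_mem _ _ ?_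
    rw [xe, dif_pos hkl]
    exact xE_mem n K hkl (by simpa using ht')
  all_goals exact Submodule.zero_mem _

lemma Sset_antitone {m m' : ℕ} (h : m' ≤ m) : Sset n m ⊆ Sset n m' := by
  rintro (⟨⟨i, j⟩, hij⟩ | i | i) hx
  · exact le_trans h hx
  · exact Nat.le_zero.mp (le_trans h (Nat.le_of_eq hx))
  · trivial

lemma derSeries_le (hn : n ≠ 0) (k : ℕ) : derSeries n K (k + 1) ≤ Vm n K (2 ^ k) := by
  haveI : NeZero n := ⟨hn⟩
  induction k with
  | zero =>
    show bracketSpan n K (derSeries n K 0) (derSeries n K 0) ≤ Vm n K 1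
    refine bracketSpan_le n K (A := Set.univ) (B := Set.univ) ?_ ?_ ?_
    · rw [Finsupp.supported_univ]; exact le_top
    · rw [Finsupp.supported_univ]; exact le_top
    · intro s _ t _; exact bb_mem_one n K s t
  | succ k ih =>
    show bracketSpan n K (derSeries n K (k+1)) (derSeries n K (k+1)) ≤ Vm n K (2 ^ (k+1))
    have h2 : (2 : ℕ) ^ (k + 1) = 2 ^ k + 2 ^ k := by ring
    rw [h2]
    exact bracketSpan_le n K ih ih fun s hs t ht => bb_mem n K hs ht


/-- the Lie algebra `Iuₙ` is solvable. -/
theorem stmt11 (n : ℕ) (hn : 2 ≤ n) (K : Type*) [Field K] (hK : (2 : K) ≠ 0) :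
    ∃ k : ℕ, derSeries n K k = ⊥ := by
  haveI : NeZero n := ⟨by omega⟩
  refine ⟨n + 2, le_bot_iff.mp ?_⟩
  have h1 : derSeries n K (n + 1) ≤ Vm n K n := by
    refine le_trans (derSeries_le n K (by omega) n) ?_
    exact Finsupp.supported_mono (Sset_antitone n (Nat.le_of_lt (Nat.lt_two_pow_self (n := n))))
  show bracketSpan n K (derSeries n K (n+1)) (derSeries n K (n+1)) ≤ ⊥
  refine bracketSpan_le n K h1 h1 ?_
  rintro s hs t ht
  rcases s with ⟨⟨i, j⟩, hij⟩ | i | i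
  · have hs' : n ≤ lam n (i, j).1 (i, j).2 := hs
    have h2 : lam n (i, j).1 (i, j).2 < n := Fin.is_lt _
    omega
  · have hs' : n = 0 := hs
    omega
  · rcases t with ⟨⟨k, l⟩, hkl⟩ | p | p <;> simp [bb, Submodule.mem_bot]
end
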